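/- Let H be a complex Hilbert space with orthonormal basis {e_k}_{k≥1} and set f_k = e_k + e_{k+1} for k ≥ 1. Then for every finitely supported scalar sequence {c_k}_{k≥1} ⊂ ℂ one has ‖∑_{k} c_k f_{k+1}‖ = ‖∑_{k} c_k f_k‖, and consequently there exists a linear isometry W : H → H with W f_k = f_{k+1} for all k ≥ 1. -/
import Mathlib

/-- For `f_k = e_k + e_{k+1}` the shift `f_k ↦ f_{k+1}` preserves norms of finite
linear combinations, and hence extends to a linear isometry of `H`. -/
theorem sum_shifted_basis_isometric_shift
    {H : Type*} [NormedAddCommGroup H] [InnerProductSpace ℂ H] [CompleteSpace H]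
    (e : HilbertBasis ℕ ℂ H) (f : ℕ → H) (hf : ∀ k, f k = e k + e (k + 1)) :
    (∀ c : ℕ →₀ ℂ,
      ‖c.sum fun k a => a • f (k + 1)‖ = ‖c.sum fun k a => a • f k‖) ∧
    ∃ W : H →ₗᵢ[ℂ] H, ∀ k, W (f k) = f (k + 1) := by
  classical
  -- the shifted family is orthonormal
  have hv : Orthonormal ℂ (fun k : ℕ => e (k + 1)) :=
    e.orthonormal.comp _ (fun a b h => by omega)
  -- linear isometry from `ℓ²` sending `single k 1` to `e (k+1)`
  let U : lp (fun _ : ℕ => ℂ) 2 →ₗᵢ[ℂ] H := hv.orthogonalFamily.linearIsometry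
  let W : H →ₗᵢ[ℂ] H := U.comp e.repr.toLinearIsometry
  have hWe : ∀ k, W (e k) = e (k + 1) := by
    intro k
    have h1 : e.repr (e k) = lp.single 2 k (1 : ℂ) := e.repr_self k
    have h2 : U (lp.single 2 k (1 : ℂ)) =
        LinearIsometry.toSpanSingleton ℂ H (hv.1 k) (1 : ℂ) :=
      hv.orthogonalFamily.linearIsometry_apply_single (1 : ℂ)
    simp only [W, LinearIsometry.coe_comp, Function.comp_apply,
      LinearIsometryEquiv.coe_toLinearIsometry, h1, h2,
      LinearIsometry.toSpanSingleton_apply, one_smul]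
  have hWf : ∀ k, W (f k) = f (k + 1) := by
    intro k
    rw [hf k, map_add, hWe, hWe, hf (k + 1)]
  refine ⟨?_, W, hWf⟩
  intro c
  have : (c.sum fun k a => a • f (k + 1)) = W (c.sum fun k a => a • f k) := by
    rw [map_finsuppSum]
    exact Finsupp.sum_congr fun k _ => by rw [map_smul, hWf]
  rw [this, W.norm_map]
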